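/- Let f(x) = Σ_{y=0}^{p-1} a_y ω_p^{xy} with ω_p = e^{2πi/p}, and suppose there is y' with |a_{y'}| > 2 Σ_{y ≠ y'}|a_y|. Then for every x ∈ 𝔽_p, |arg(f(x)/f(0)) − arg(ω_p^{x y'})|_{2π} < π/3, where |·|_{2π} denotes distance to the nearest integer multiple of 2π. -/

import Mathlib

open Complex Real Finset


lemma arg_small {z : ℂ} (hz : ‖z‖ < 1/2) : |Complex.arg (1+z)| < Real.pi/6 := by
  have hre : (0:ℝ) < (1+z).re := by
    simp only [Complex.add_re, Complex.one_re]
    have := abs_le.mp (le_trans (Complex.abs_re_le_norm z) hz.le)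
    linarith [this.1]
  have hw0 : (1+z) ≠ 0 := fun h => by simp [h] at hre
  have habs : 0 < ‖1+z‖ := norm_pos_iff.mpr hw0
  have hsq : Complex.normSq z < 1/4 := by
    have := Complex.sq_norm z
    nlinarith [norm_nonneg z]
  have hnsq : z.re^2 + z.im^2 < 1/4 := by
    have := Complex.normSq_apply z; nlinarith [hsq]
  have him : |(1+z).im| < (1/2) * ‖1+z‖ := by
    have h2 : ((1+z).im)^2 < ((1/2) * ‖1+z‖)^2 := by
      have : ‖1+z‖ ^ 2 = (1+z).re^2 + (1+z).im^2 := by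
        rw [Complex.sq_norm, Complex.normSq_apply]; ring
      rw [mul_pow, this]
      simp only [Complex.add_re, Complex.add_im, Complex.one_re, Complex.one_im]
      nlinarith [sq_nonneg (2*z.re + 1/2)]
    nlinarith [abs_nonneg ((1+z).im), _root_.sq_abs ((1+z).im),
      mul_pos (by norm_num : (0:ℝ)<1/2) habs]
  have hsin : |Real.sin (Complex.arg (1+z))| < 1/2 := by
    rw [Complex.sin_arg, abs_div, abs_of_pos habs, div_lt_iff₀ habs]
    linarith
  have hhalf : |Complex.arg (1+z)| < Real.pi/2 :=
    Complex.abs_arg_lt_pi_div_two_iff.mpr (Or.inl hre)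
  by_contra hcon
  push_neg at hcon
  have hsineq : Real.sin |Complex.arg (1+z)| = |Real.sin (Complex.arg (1+z))| := by
    rcases le_or_gt 0 (Complex.arg (1+z)) with h|h
    · rw [_root_.abs_of_nonneg h,
        _root_.abs_of_nonneg (Real.sin_nonneg_of_nonneg_of_le_pi h (Complex.arg_le_pi _))]
    · rw [_root_.abs_of_neg h, Real.sin_neg,
        _root_.abs_of_neg (Real.sin_neg_of_neg_of_neg_pi_lt h (Complex.neg_pi_lt_arg _))]
  have : Real.sin (Real.pi/6) ≤ Real.sin |Complex.arg (1+z)| := by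
    apply Real.strictMonoOn_sin.monotoneOn _ _ hcon
    · constructor <;> [linarith [Real.pi_pos]; linarith [Real.pi_pos]]
    · constructor <;> [linarith [abs_nonneg (Complex.arg (1+z)), Real.pi_pos]; linarith [hhalf]]
  rw [Real.sin_pi_div_six, hsineq] at this
  linarith

lemma e_add (p : ℕ) [Fact p.Prime] (s t : ZMod p) :
    Complex.exp (2 * Real.pi * Complex.I * (((s + t : ZMod p)).val : ℂ) / p)
      = Complex.exp (2 * Real.pi * Complex.I * ((s.val : ℂ)) / p)
        * Complex.exp (2 * Real.pi * Complex.I * ((t.val : ℂ)) / p) := by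
  have hp0 : (p:ℂ) ≠ 0 := by
    exact_mod_cast Nat.Prime.ne_zero (Fact.out (p := p.Prime))
  rw [← Complex.exp_add, Complex.exp_eq_exp_iff_exists_int]
  obtain ⟨q, hq⟩ : ∃ q : ℕ, s.val + t.val = p * q + (s + t).val :=
    ⟨(s.val + t.val)/p, by rw [ZMod.val_add]; exact (Nat.div_add_mod (s.val + t.val) p).symm⟩
  refine ⟨-(q : ℤ), ?_⟩
  have hc : ((s+t).val : ℂ) = (s.val:ℂ) + t.val - p * q := by
    have : ((s.val : ℂ) + t.val) = p * q + ((s+t).val : ℂ) := by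
      exact_mod_cast congrArg (Nat.cast : ℕ → ℂ) hq
    linear_combination -this
  rw [hc]
  push_cast
  field_simp
  ring

/-- `distToMultiples d x` is the distance from `x` to the nearest integer multiple of `d`. -/
noncomputable def distToMultiples (d x : ℝ) : ℝ := ⨅ m : ℤ, |x - d * m|

/-- If `f(x) = Σ_y a_y ω_p^{xy}` with `ω_p = e^{2πi/p}` and there is `y'`
with `|a_{y'}| > 2 Σ_{y ≠ y'} |a_y|`, then for every `x ∈ 𝔽_p`,
`|arg(f(x)/f(0)) − arg(ω_p^{x y'})|_{2π} < π/3`. -/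
theorem stmt5 (p : ℕ) [Fact p.Prime] (a f : ZMod p → ℂ)
    (hf : ∀ x, f x = ∑ y : ZMod p,
      a y * Complex.exp (2 * Real.pi * Complex.I * ((x * y : ZMod p).val : ℂ) / p))
    (y' : ZMod p)
    (hy' : 2 * ∑ y ∈ Finset.univ.erase y', ‖a y‖ < ‖a y'‖) :
    ∀ x : ZMod p,
      distToMultiples (2 * Real.pi)
        (Complex.arg (f x / f 0) -
          Complex.arg (Complex.exp (2 * Real.pi * Complex.I * ((x * y' : ZMod p).val : ℂ) / p)))
        < Real.pi / 3 := by
  intro x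
  set E : ZMod p → ℂ := fun t => Complex.exp (2 * Real.pi * Complex.I * (t.val : ℂ) / p) with hE
  have hEadd : ∀ s t : ZMod p, E (s + t) = E s * E t := fun s t => e_add p s t
  have hEabs : ∀ t, ‖E t‖ = 1 := by
    intro t
    rw [hE]
    simp only
    rw [show 2 * (Real.pi:ℂ) * Complex.I * (t.val : ℂ) / p
        = ((2 * Real.pi * t.val / p : ℝ) : ℂ) * Complex.I by push_cast; ring]
    exact Complex.norm_exp_ofReal_mul_I _
  have hEne : ∀ t, E t ≠ 0 := fun t => Complex.exp_ne_zero _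
  have hE0 : E 0 = 1 := by
    rw [hE]; simp
  set S : ℝ := ∑ y ∈ Finset.univ.erase y', ‖a y‖ with hS
  have hS0 : 0 ≤ S := Finset.sum_nonneg fun y _ => norm_nonneg _
  have hA : 0 < ‖a y'‖ := lt_of_le_of_lt (by linarith) hy'
  have hA0 : a y' ≠ 0 := by
    intro h; rw [h] at hA; simp at hA
  set g : ZMod p → ℂ := fun u => ∑ y ∈ Finset.univ.erase y', a y * E (u * (y - y')) with hg
  have hgS : ∀ u, ‖g u‖ ≤ S := by
    intro u
    refine le_trans (norm_sum_le _ _) ?_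
    apply Finset.sum_le_sum
    intro y _
    rw [norm_mul, hEabs, mul_one]
  have hz : ∀ u, ‖g u / a y'‖ < 1/2 := by
    intro u
    rw [norm_div, div_lt_iff₀ hA]
    linarith [hgS u]
  have hne : ∀ u, 1 + g u / a y' ≠ 0 := by
    intro u h
    have h1 : g u / a y' = -1 := by linear_combination h
    have := hz u
    rw [h1] at this
    simp at this
    linarith
  have hfx : ∀ u, f u = E (u * y') * (a y' * (1 + g u / a y')) := by
    intro u
    rw [hf u]
    have step : ∀ y : ZMod p,
        a y * Complex.exp (2 * Real.pi * Complex.I * ((u * y : ZMod p).val : ℂ) / p)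
          = E (u * y') * (a y * E (u * (y - y'))) := by
      intro y
      have h1 : (u * y : ZMod p) = u * y' + u * (y - y') := by ring
      have h2 : E (u * y) = E (u * y') * E (u * (y - y')) := by
        rw [h1, hEadd]
      calc a y * Complex.exp (2 * Real.pi * Complex.I * ((u * y : ZMod p).val : ℂ) / p)
          = a y * E (u * y) := rfl
        _ = E (u * y') * (a y * E (u * (y - y'))) := by rw [h2]; ring
    rw [Finset.sum_congr rfl (fun y _ => step y), ← Finset.mul_sum]
    congr 1
    have hsplit : ∑ y : ZMod p, a y * E (u * (y - y'))
        = a y' * E (u * (y' - y')) + ∑ y ∈ Finset.univ.erase y', a y * E (u * (y - y')) :=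
      (Finset.add_sum_erase _ _ (Finset.mem_univ y')).symm
    rw [hsplit]
    rw [show (y' - y') = (0 : ZMod p) by ring, mul_zero, hE0, mul_one]
    rw [show (∑ y ∈ Finset.univ.erase y', a y * E (u * (y - y'))) = g u from rfl]
    field_simp
  have hfu : ∀ u, f u ≠ 0 := fun u => by
    rw [hfx u]
    exact mul_ne_zero (hEne _) (mul_ne_zero hA0 (hne u))
  have hf0 : f 0 = a y' * (1 + g 0 / a y') := by
    rw [hfx 0, show ((0 : ZMod p) * y') = (0 : ZMod p) by ring, hE0, one_mul]
  have θ : ZMod p → ℝ := fun u => Complex.arg (1 + g u / a y')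
  set D : ℝ := Complex.arg (f x / f 0) - Complex.arg (E (x * y')) with hD
  have hang : ((D : ℝ) : Real.Angle)
      = ((Complex.arg (1 + g x / a y') - Complex.arg (1 + g 0 / a y') : ℝ) : Real.Angle) := by
    have h1 : ((Complex.arg (f x / f 0) : ℝ) : Real.Angle)
        = (Complex.arg (f x) : Real.Angle) - (Complex.arg (f 0) : Real.Angle) :=
      Complex.arg_div_coe_angle (hfu x) (hfu 0)
    have h2 : ((Complex.arg (f x) : ℝ) : Real.Angle)
        = (Complex.arg (E (x * y')) : Real.Angle) + (Complex.arg (a y') : Real.Angle)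
          + (Complex.arg (1 + g x / a y') : Real.Angle) := by
      rw [hfx x, Complex.arg_mul_coe_angle (hEne _) (mul_ne_zero hA0 (hne x)),
        Complex.arg_mul_coe_angle hA0 (hne x)]
      abel
    have h3 : ((Complex.arg (f 0) : ℝ) : Real.Angle)
        = (Complex.arg (a y') : Real.Angle) + (Complex.arg (1 + g 0 / a y') : Real.Angle) := by
      rw [hf0, Complex.arg_mul_coe_angle hA0 (hne 0)]
    rw [hD, Real.Angle.coe_sub, h1, h2, h3, Real.Angle.coe_sub]
    abel
  obtain ⟨k, hk⟩ := Real.Angle.angle_eq_iff_two_pi_dvd_sub.mp hang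
  have hfinal : distToMultiples (2 * Real.pi) D
      ≤ |Complex.arg (1 + g x / a y') - Complex.arg (1 + g 0 / a y')| := by
    have hb : BddBelow (Set.range fun m : ℤ => |D - 2 * Real.pi * m|) := by
      refine ⟨0, ?_⟩
      rintro y ⟨m, rfl⟩
      exact abs_nonneg _
    calc distToMultiples (2 * Real.pi) D ≤ |D - 2 * Real.pi * k| := ciInf_le hb k
      _ = _ := by
        rw [show D - 2 * Real.pi * k
          = Complex.arg (1 + g x / a y') - Complex.arg (1 + g 0 / a y') by linarith [hk]]
  calc distToMultiples (2 * Real.pi) D ≤ _ := hfinal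
    _ ≤ |Complex.arg (1 + g x / a y')| + |Complex.arg (1 + g 0 / a y')| := abs_sub _ _
    _ < Real.pi/6 + Real.pi/6 := add_lt_add (arg_small (hz x)) (arg_small (hz 0))
    _ = Real.pi/3 := by ring
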